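/- Let N ≥ 2 and let A be the (N+1)×(N+1) matrix equal to the P_N closure matrix except in the last row, which is (0,…,0, a_{N−2}, a_{N−1}, a_N). If a_{N−1} > ((2N−1)/(N−1)²)·a_{N−2}·(N·a_{N−2} − (N−1)·a_N), then there exists a symmetric positive definite matrix A₀ = diag(D, B), with D = diag(1, 3, …, 2N−3) and B a 2×2 symmetric positive definite matrix, such that A₀A is symmetric; hence A is real diagonalizable. -/

import Mathlib

open Matrix

def RealDiagonalizable {n : ℕ} (A : Matrix (Fin n) (Fin n) ℝ) : Prop :=
  ∃ P D : Matrix (Fin n) (Fin n) ℝ, IsUnit P.det ∧ D.IsDiag ∧ A = P⁻¹ * D * P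

noncomputable def closureMatrix (N : ℕ) (lastRow : Fin (N + 1) → ℝ) :
    Matrix (Fin (N + 1)) (Fin (N + 1)) ℝ := fun i j =>
  if (i : ℕ) = N then lastRow j
  else if (j : ℕ) = (i : ℕ) + 1 then (((i : ℕ) : ℝ) + 1) / (2 * ((i : ℕ) : ℝ) + 1)
  else if (i : ℕ) = (j : ℕ) + 1 then ((i : ℕ) : ℝ) / (2 * ((i : ℕ) : ℝ) + 1)
  else 0

open scoped MatrixOrder in
lemma realDiagonalizable_of_symmetrizer {n : ℕ} {A A₀ : Matrix (Fin n) (Fin n) ℝ}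
    (h₀ : A₀.PosDef) (hs : (A₀ * A).IsSymm) : RealDiagonalizable A := by
  set C := CFC.sqrt A₀ with hC
  have hCherm : C.IsHermitian := (CFC.sqrt_nonneg A₀).posSemidef.isHermitian
  have hC2 : C * C = A₀ := CFC.sqrt_mul_sqrt_self A₀ h₀.posSemidef.nonneg
  have hCdet : IsUnit C.det := by
    have h1 : C.det * C.det = A₀.det := by rw [← det_mul, hC2]
    have h2 : A₀.det ≠ 0 := ne_of_gt h₀.det_pos
    exact isUnit_iff_ne_zero.mpr (fun h => h2 (by rw [← h1, h, mul_zero]))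
  haveI : Invertible C := C.invertibleOfIsUnitDet hCdet
  have hCinv : C⁻¹ * C = 1 := nonsing_inv_mul C hCdet
  set M := C⁻¹ * (A₀ * A) * C⁻¹ with hM
  have hCinvherm : (C⁻¹).IsHermitian := by
    unfold Matrix.IsHermitian
    rw [conjTranspose_nonsing_inv, hCherm.eq]
  have hSymmHerm : (A₀ * A).IsHermitian := by
    unfold Matrix.IsHermitian
    rw [conjTranspose_eq_transpose_of_trivial]
    exact hs
  have hMherm : M.IsHermitian := by
    unfold Matrix.IsHermitian
    rw [hM, conjTranspose_mul, conjTranspose_mul, hCinvherm.eq, hSymmHerm.eq]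
    simp only [Matrix.mul_assoc]
  have hA : C⁻¹ * M * C = A := by
    rw [hM, ← hC2]
    simp only [Matrix.mul_assoc, inv_mul_cancel_left_of_invertible, hCinv, Matrix.mul_one]
  have hspec := hMherm.spectral_theorem
  set U : Matrix (Fin n) (Fin n) ℝ := (hMherm.eigenvectorUnitary : Matrix (Fin n) (Fin n) ℝ)
  have hUU : star U * U = 1 := (mem_unitaryGroup_iff').mp hMherm.eigenvectorUnitary.2
  have hsUinv : (star U)⁻¹ = U := inv_eq_right_inv hUU
  refine ⟨star U * C, diagonal (RCLike.ofReal ∘ hMherm.eigenvalues), ?_, isDiag_diagonal _, ?_⟩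
  · rw [det_mul]
    have hu : IsUnit (star U).det := by
      apply isUnit_iff_ne_zero.mpr
      intro hdet
      have h1 := congr_arg det hUU
      rw [det_mul, hdet, zero_mul, det_one] at h1
      exact zero_ne_one h1
    exact hu.mul hCdet
  · have hPinv : (star U * C)⁻¹ = C⁻¹ * U := by rw [Matrix.mul_inv_rev, hsUinv]
    rw [hPinv]
    calc A = C⁻¹ * M * C := hA.symm
    _ = C⁻¹ * (U * diagonal (RCLike.ofReal ∘ hMherm.eigenvalues) * star U) * C := by
          conv_lhs => rw [hspec, Unitary.conjStarAlgAut_apply]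
    _ = (C⁻¹ * U) * diagonal (RCLike.ofReal ∘ hMherm.eigenvalues) * (star U * C) := by
          noncomm_ring

set_option maxHeartbeats 1000000 in
/-- Hyperbolicity of the 3-degree-of-freedom ML closure: under the constraint on `a_{N-1}`,
there exists a symmetrizer `A₀ = diag(1, 3, …, 2N-3, B)` with `B` a `2×2` SPD block such
that `A₀ * A` is symmetric; hence `A` is real diagonalizable. -/
theorem closure_dof3_hyperbolic (N : ℕ) (hN : 2 ≤ N) (a2 a1 a0 : ℝ)
    (h : a1 > (2 * (N : ℝ) - 1) / ((N : ℝ) - 1) ^ 2 * a2 *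
      ((N : ℝ) * a2 - ((N : ℝ) - 1) * a0)) :
    let A := closureMatrix N fun j =>
      if (j : ℕ) = N - 2 then a2 else if (j : ℕ) = N - 1 then a1
      else if (j : ℕ) = N then a0 else 0
    ∃ A₀ : Matrix (Fin (N + 1)) (Fin (N + 1)) ℝ,
      A₀.PosDef ∧
      (∀ i j : Fin (N + 1), (i : ℕ) < N - 1 → i ≠ j → A₀ i j = 0) ∧
      (∀ i : Fin (N + 1), (i : ℕ) < N - 1 → A₀ i i = 2 * ((i : ℕ) : ℝ) + 1) ∧
      (A₀ * A).IsSymm ∧ RealDiagonalizable A := by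
  intro A
  have hAval : ∀ i j : Fin (N+1), A i j =
      (if (i : ℕ) = N then
        (if (j : ℕ) = N - 2 then a2 else if (j : ℕ) = N - 1 then a1
          else if (j : ℕ) = N then a0 else 0)
      else if (j : ℕ) = (i : ℕ) + 1 then (((i : ℕ) : ℝ) + 1) / (2 * ((i : ℕ) : ℝ) + 1)
      else if (i : ℕ) = (j : ℕ) + 1 then ((i : ℕ) : ℝ) / (2 * ((i : ℕ) : ℝ) + 1)
      else 0) := fun i j => rfl
  -- cast facts
  have hc1 : ((N - 1 : ℕ) : ℝ) = (N : ℝ) - 1 := by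
    have h1N : (1:ℕ) ≤ N := by omega
    push_cast [Nat.cast_sub h1N]; ring
  have hc2 : ((N - 2 : ℕ) : ℝ) = (N : ℝ) - 2 := by
    push_cast [Nat.cast_sub hN]; ring
  have hn2 : (2:ℝ) ≤ (N : ℝ) := by exact_mod_cast hN
  set n' : ℝ := (N : ℝ) with hn'def
  have h0n : 0 < n' := by linarith
  have h1p : 0 < n' - 1 := by linarith
  have h2p : 0 < 2 * n' - 1 := by linarith
  have h2p' : 0 < 2 * (n' - 1) + 1 := by linarith
  have h3p : 0 < 2 * (n' - 2) + 1 := by linarith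
  have hne_n : n' ≠ 0 := ne_of_gt h0n
  have hne_1 : n' - 1 ≠ 0 := ne_of_gt h1p
  have hne_2 : 2 * n' - 1 ≠ 0 := ne_of_gt h2p
  have hne_2' : 2 * (n' - 1) + 1 ≠ 0 := ne_of_gt h2p'
  have hne_3 : 2 * (n' - 2) + 1 ≠ 0 := ne_of_gt h3p
  obtain ⟨d, hddef⟩ : ∃ x : ℝ,
      x = a1 - (2 * n' - 1) / (n' - 1) ^ 2 * a2 * (n' * a2 - (n' - 1) * a0) := ⟨_, rfl⟩
  have hδ : 0 < d := hddef ▸ sub_pos.mpr h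
  -- the symmetrizer block entries, introduced as opaque constants
  obtain ⟨c, hcdef⟩ : ∃ x : ℝ,
      x = (n'-1)/n' * a1 + (2*n'-1)/n' * (a2*a0) - (2*n'-1)/(n'-1) * a2^2 := ⟨_, rfl⟩
  have hcid : c * (n' * (n'-1)) = d * ((n'-1)^2) := by
    rw [hcdef, hddef]; field_simp; ring
  have hc : 0 < c := by
    nlinarith [hcid, mul_pos h0n h1p, mul_pos hδ (pow_pos h1p 2)]
  have hcne : c ≠ 0 := ne_of_gt hc
  obtain ⟨t, htdef⟩ : ∃ x : ℝ, x = (n'-1)/c := ⟨_, rfl⟩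
  have ht : 0 < t := htdef ▸ div_pos h1p hc
  have htc : t * c = n' - 1 := by rw [htdef]; field_simp
  obtain ⟨e, hedef⟩ : ∃ x : ℝ, x = a1 + a2*a0*(2*n'-1)/(n'-1) := ⟨_, rfl⟩
  have heid : e * (n'-1)^2 = d * (n'-1)^2 + n' * (2*n'-1) * a2^2 := by
    rw [hedef, hddef]; field_simp; ring
  have he : 0 < e := by
    nlinarith [heid, mul_pos hδ (pow_pos h1p 2), pow_pos h1p 2,
      mul_nonneg (mul_nonneg h0n.le h2p.le) (sq_nonneg a2)]
  obtain ⟨b11, hb11def⟩ : ∃ x : ℝ, x = t * ((2*n'-1)/n') * e := ⟨_, rfl⟩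
  obtain ⟨b12, hb12def⟩ : ∃ x : ℝ, x = -(t * a2 * (2*n'-1)/(n'-1)) := ⟨_, rfl⟩
  have hb11 : 0 < b11 := hb11def ▸ mul_pos (mul_pos ht (div_pos h2p h0n)) he
  have hdetid : (b11 * t - b12^2) * n' = t^2 * (2*n'-1) * d := by
    rw [hb11def, hb12def, hedef, hddef]; field_simp; ring
  have hdet : 0 < b11 * t - b12^2 := by
    nlinarith [hdetid, h0n, mul_pos (mul_pos (pow_pos ht 2) h2p) hδ]
  -- quadratic form positivity
  have hquad : ∀ u v : ℝ, (u ≠ 0 ∨ v ≠ 0) →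
      0 < u * (b11*u + b12*v) + v * (b12*u + t*v) := by
    intro u v huv
    rcases eq_or_ne v 0 with hv | hv
    · subst hv
      have hu : u ≠ 0 := by tauto
      have hu2 : 0 < u^2 := by positivity
      nlinarith [mul_pos hb11 hu2]
    · have hv2 : 0 < v^2 := by positivity
      nlinarith [sq_nonneg (b11*u + b12*v), mul_pos hdet hv2, hb11]
  -- index constants
  have hltn1 : N - 1 < N + 1 := by omega
  have hltn0 : N < N + 1 := by omega
  set n1 : Fin (N+1) := ⟨N-1, hltn1⟩ with hn1def
  set n0 : Fin (N+1) := ⟨N, hltn0⟩ with hn0def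
  have hvn1 : (n1 : ℕ) = N - 1 := rfl
  have hvn0 : (n0 : ℕ) = N := rfl
  have hne10 : n1 ≠ n0 := by
    intro hh
    have := congrArg (Fin.val) hh
    simp only [hvn1, hvn0] at this
    omega
  -- the symmetrizer matrix
  obtain ⟨A₀, hA₀def⟩ : ∃ M : Matrix (Fin (N+1)) (Fin (N+1)) ℝ, M = fun (i j : Fin (N+1)) =>
      if (i:ℕ) = N - 1 ∧ (j:ℕ) = N - 1 then b11
      else if ((i:ℕ) = N - 1 ∧ (j:ℕ) = N) ∨ ((i:ℕ) = N ∧ (j:ℕ) = N - 1) then b12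
      else if (i:ℕ) = N ∧ (j:ℕ) = N then t
      else if i = j then 2 * ((i:ℕ) : ℝ) + 1
      else 0 := ⟨_, rfl⟩
  have hA₀val : ∀ i j : Fin (N+1), A₀ i j =
      (if (i:ℕ) = N - 1 ∧ (j:ℕ) = N - 1 then b11
      else if ((i:ℕ) = N - 1 ∧ (j:ℕ) = N) ∨ ((i:ℕ) = N ∧ (j:ℕ) = N - 1) then b12
      else if (i:ℕ) = N ∧ (j:ℕ) = N then t
      else if i = j then 2 * ((i:ℕ) : ℝ) + 1
      else 0) := fun i j => by rw [hA₀def]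
  have hA₀symm : ∀ i j : Fin (N+1), A₀ j i = A₀ i j := by
    intro i j
    rw [hA₀val, hA₀val]
    simp only [Fin.ext_iff]
    split_ifs <;> first | rfl | (exfalso; omega) | (norm_cast; omega) | omega
  -- basic entry facts
  have hoff : ∀ i j : Fin (N+1), (i:ℕ) < N - 1 → i ≠ j → A₀ i j = 0 := by
    intro i j hi hij
    have hij' : (i:ℕ) ≠ (j:ℕ) := fun hh => hij (Fin.ext hh)
    rw [hA₀val]
    simp only [Fin.ext_iff]
    split_ifs <;> first | rfl | (exfalso; omega)
  have hdiagA₀ : ∀ i : Fin (N+1), (i:ℕ) < N - 1 → A₀ i i = 2 * ((i:ℕ) : ℝ) + 1 := by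
    intro i hi
    rw [hA₀val]
    simp only [Fin.ext_iff]
    split_ifs <;> first | rfl | (exfalso; omega)
  have hb1_ : A₀ n1 n1 = b11 := by
    rw [hA₀val, if_pos ⟨hvn1, hvn1⟩]
  have hb2_ : A₀ n1 n0 = b12 := by
    rw [hA₀val]
    rw [if_neg (by simp only [hvn1, hvn0]; omega), if_pos (Or.inl ⟨hvn1, hvn0⟩)]
  have hb3_ : A₀ n0 n1 = b12 := by
    rw [hA₀val]
    rw [if_neg (by simp only [hvn1, hvn0]; omega), if_pos (Or.inr ⟨hvn0, hvn1⟩)]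
  have hb4_ : A₀ n0 n0 = t := by
    rw [hA₀val]
    rw [if_neg (by simp only [hvn0]; omega), if_neg (by simp only [hvn0]; omega),
      if_pos ⟨hvn0, hvn0⟩]
  have hzero_entry : ∀ p k : Fin (N+1), ((p:ℕ) = N - 1 ∨ (p:ℕ) = N) →
      (k:ℕ) ≠ N - 1 → (k:ℕ) ≠ N → A₀ p k = 0 := by
    intro p k hp hk1 hk0
    rw [hA₀val]
    simp only [Fin.ext_iff]
    split_ifs <;> first | rfl | (exfalso; omega)
  -- row formulas
  have hrowlt : ∀ (i : Fin (N+1)), (i:ℕ) < N - 1 → ∀ x : Fin (N+1) → ℝ,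
      ∑ k, A₀ i k * x k = (2 * ((i:ℕ) : ℝ) + 1) * x i := by
    intro i hi x
    rw [Finset.sum_eq_single i]
    · rw [hdiagA₀ i hi]
    · intro k _ hk
      rw [hoff i k hi (fun hh => hk hh.symm), zero_mul]
    · intro hmem; exact absurd (Finset.mem_univ i) hmem
  have hpair_subset : ({n1, n0} : Finset (Fin (N+1))) ⊆ Finset.univ := Finset.subset_univ _
  have hrowblock : ∀ (i : Fin (N+1)), (i = n1 ∨ i = n0) → ∀ x : Fin (N+1) → ℝ,
      ∑ k, A₀ i k * x k = A₀ i n1 * x n1 + A₀ i n0 * x n0 := by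
    intro i hi x
    rw [← Finset.sum_subset hpair_subset]
    · rw [Finset.sum_pair hne10]
    · intro k _ hk
      simp only [Finset.mem_insert, Finset.mem_singleton] at hk
      push_neg at hk
      have hk1 : (k:ℕ) ≠ N - 1 := fun hh => hk.1 (Fin.ext (by rw [hh, hvn1]))
      have hk0 : (k:ℕ) ≠ N := fun hh => hk.2 (Fin.ext (by rw [hh, hvn0]))
      have hp : (i:ℕ) = N - 1 ∨ (i:ℕ) = N := by
        rcases hi with hi | hi <;> subst hi
        · exact Or.inl hvn1
        · exact Or.inr hvn0
      rw [hzero_entry i k hp hk1 hk0, zero_mul]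
  -- A entry lemmas
  have hA_zero : ∀ i j : Fin (N+1), (i:ℕ) < N → (j:ℕ) ≠ (i:ℕ)+1 → (i:ℕ) ≠ (j:ℕ)+1 →
      A i j = 0 := by
    intro i j h1 h2 h3
    rw [hAval, if_neg (by omega), if_neg h2, if_neg h3]
  have hA_up : ∀ i j : Fin (N+1), (i:ℕ) < N → (j:ℕ) = (i:ℕ)+1 →
      A i j = (((i:ℕ) : ℝ) + 1) / (2 * ((i:ℕ) : ℝ) + 1) := by
    intro i j h1 h2
    rw [hAval, if_neg (by omega), if_pos h2]
  have hA_dn : ∀ i j : Fin (N+1), (i:ℕ) < N → (i:ℕ) = (j:ℕ)+1 →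
      A i j = ((i:ℕ) : ℝ) / (2 * ((i:ℕ) : ℝ) + 1) := by
    intro i j h1 h2
    rw [hAval, if_neg (by omega), if_neg (by omega), if_pos h2]
  have hA_last : ∀ j : Fin (N+1), A n0 j =
      (if (j : ℕ) = N - 2 then a2 else if (j : ℕ) = N - 1 then a1
        else if (j : ℕ) = N then a0 else 0) := by
    intro j; rw [hAval, if_pos hvn0]
  -- product entries
  have hSlt : ∀ (i j : Fin (N+1)), (i:ℕ) < N - 1 →
      (A₀ * A) i j = (2 * ((i:ℕ) : ℝ) + 1) * A i j := by
    intro i j hi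
    rw [Matrix.mul_apply]
    exact hrowlt i hi (fun k => A k j)
  have hS1 : ∀ j : Fin (N+1),
      (A₀ * A) n1 j = b11 * A n1 j + b12 * A n0 j := by
    intro j
    rw [Matrix.mul_apply, hrowblock n1 (Or.inl rfl) (fun k => A k j), hb1_, hb2_]
  have hS0 : ∀ j : Fin (N+1),
      (A₀ * A) n0 j = b12 * A n1 j + t * A n0 j := by
    intro j
    rw [Matrix.mul_apply, hrowblock n0 (Or.inr rfl) (fun k => A k j), hb3_, hb4_]
  -- the three symmetrizer identities
  have hid1 : b11 * ((n'-1) / (2*(n'-1)+1)) + b12 * a2 =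
      (2*(n'-2)+1) * (((n'-2)+1) / (2*(n'-2)+1)) := by
    have hrhs : (2*(n'-2)+1) * (((n'-2)+1) / (2*(n'-2)+1)) = n' - 1 := by
      field_simp
      ring_nf
    have hlhs : b11 * ((n'-1) / (2*(n'-1)+1)) + b12 * a2 = t * c := by
      rw [hb11def, hb12def, hcdef, hedef]
      field_simp
      ring
    rw [hrhs, hlhs]
    exact htc
  have hid2 : b12 * ((n'-1) / (2*(n'-1)+1)) + t * a2 = 0 := by
    rw [hb12def]; field_simp; ring
  have hid3 : b11 * (((n'-1)+1) / (2*(n'-1)+1)) + b12 * a0 = t * a1 := by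
    rw [hb11def, hb12def, hedef]
    field_simp
    ring
  -- symmetry of A₀ * A
  have hkey : ∀ i j : Fin (N+1), (i:ℕ) < (j:ℕ) → (A₀ * A) j i = (A₀ * A) i j := by
    intro i j hij
    have hjle : (j:ℕ) ≤ N := by omega
    have hile : (i:ℕ) ≤ N := by omega
    rcases (by omega : (j:ℕ) < N - 1 ∨ (j:ℕ) = N - 1 ∨ (j:ℕ) = N) with hj | hj | hj
    · -- both strictly inside
      have hi : (i:ℕ) < N - 1 := by omega
      rw [hSlt i j hi, hSlt j i hj]
      rcases eq_or_ne ((j:ℕ)) ((i:ℕ)+1) with hj1 | hj1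
      · rw [hA_up i j (by omega) hj1, hA_dn j i (by omega) hj1]
        have hcast : ((j:ℕ) : ℝ) = ((i:ℕ) : ℝ) + 1 := by exact_mod_cast hj1
        have hipos : (0:ℝ) < 2 * ((i:ℕ):ℝ) + 1 := by positivity
        have hipos2 : (0:ℝ) < 2 * (((i:ℕ):ℝ) + 1) + 1 := by positivity
        rw [hcast]
        field_simp
        try ring
      · rw [hA_zero i j (by omega) hj1 (by omega), hA_zero j i (by omega) (by omega) hj1,
          mul_zero, mul_zero]
    · -- j is the (N-1)-st
      have hjn1 : j = n1 := Fin.ext (by rw [hj, hvn1])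
      subst hjn1
      have hi : (i:ℕ) < N - 1 := by omega
      rw [hSlt i n1 hi, hS1 i]
      rcases eq_or_ne ((i:ℕ)) (N-2) with hi2 | hi2
      · have hup : (n1:ℕ) = (i:ℕ) + 1 := by rw [hvn1]; omega
        rw [hA_up i n1 (by omega) hup, hA_dn n1 i (by omega) hup,
          hA_last i, if_pos hi2]
        have hci : ((i:ℕ) : ℝ) = n' - 2 := by rw [hi2, hc2]
        have hcn1 : ((n1:ℕ) : ℝ) = n' - 1 := by rw [hvn1, hc1]
        rw [hci, hcn1]
        linarith [hid1]
      · rw [hA_zero i n1 (by omega) (by rw [hvn1]; omega) (by rw [hvn1]; omega),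
          hA_zero n1 i (by omega) (by omega) (by rw [hvn1]; omega),
          hA_last i, if_neg hi2, if_neg (by omega), if_neg (by omega)]
        ring
    · -- j is the last one
      have hjn0 : j = n0 := Fin.ext (by rw [hj, hvn0])
      subst hjn0
      rcases (by omega : (i:ℕ) < N - 1 ∨ (i:ℕ) = N - 1) with hi | hi
      · rw [hSlt i n0 hi, hS0 i]
        have hAin0 : A i n0 = 0 :=
          hA_zero i n0 (by omega) (by rw [hvn0]; omega) (by rw [hvn0]; omega)
        rw [hAin0, mul_zero]
        rcases eq_or_ne ((i:ℕ)) (N-2) with hi2 | hi2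
        · have hdn : (n1:ℕ) = (i:ℕ) + 1 := by rw [hvn1]; omega
          rw [hA_dn n1 i (by omega) hdn, hA_last i, if_pos hi2]
          have hcn1 : ((n1:ℕ) : ℝ) = n' - 1 := by rw [hvn1, hc1]
          rw [hcn1]
          linarith [hid2]
        · rw [hA_zero n1 i (by omega) (by omega) (by rw [hvn1]; omega),
            hA_last i, if_neg hi2, if_neg (by omega), if_neg (by omega)]
          ring
      · have hin1 : i = n1 := Fin.ext (by rw [hi, hvn1])
        subst hin1
        rw [hS1 n0, hS0 n1]
        have hAn1n1 : A n1 n1 = 0 :=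
          hA_zero n1 n1 (by omega) (by omega) (by omega)
        have hAn1n0 : A n1 n0 = (((n1:ℕ):ℝ) + 1) / (2 * ((n1:ℕ):ℝ) + 1) :=
          hA_up n1 n0 (by omega) (by rw [hvn0, hvn1]; omega)
        rw [hAn1n1, hAn1n0, hA_last n1, hA_last n0,
          if_neg (by rw [hvn1]; omega), if_pos hvn1,
          if_neg (by rw [hvn0]; omega), if_neg (by rw [hvn0]; omega), if_pos hvn0]
        have hcn1 : ((n1:ℕ) : ℝ) = n' - 1 := by rw [hvn1, hc1]
        rw [hcn1, mul_zero, zero_add]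
        linarith [hid3]
  have hsymm : (A₀ * A).IsSymm := by
    apply Matrix.IsSymm.ext
    intro i j
    rcases lt_trichotomy ((i:ℕ)) ((j:ℕ)) with hlt | heq | hgt
    · exact hkey i j hlt
    · rw [Fin.ext heq]
    · exact (hkey j i hgt).symm
  -- positive definiteness
  have hposdef : A₀.PosDef := by
    rw [Matrix.posDef_iff_dotProduct_mulVec]
    constructor
    · rw [Matrix.IsHermitian, conjTranspose_eq_transpose_of_trivial]
      ext i j
      rw [Matrix.transpose_apply]
      exact hA₀symm i j
    · intro x hx
      have hsx : star x = x := by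
        funext k; exact star_trivial _
      have hform : dotProduct (star x) (A₀ *ᵥ x) = ∑ i, x i * ∑ k, A₀ i k * x k := by
        rw [hsx]; rfl
      rw [hform]
      have hsplit : ∑ i, x i * ∑ k, A₀ i k * x k =
          (∑ i ∈ Finset.univ \ {n1, n0}, x i * ∑ k, A₀ i k * x k) +
          (x n1 * ∑ k, A₀ n1 k * x k + x n0 * ∑ k, A₀ n0 k * x k) := by
        rw [← Finset.sum_sdiff hpair_subset, Finset.sum_pair hne10]
      rw [hsplit]
      have hmemlt : ∀ i : Fin (N+1), i ∈ Finset.univ \ ({n1, n0} : Finset (Fin (N+1))) →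
          (i:ℕ) < N - 1 := by
        intro i hi
        simp only [Finset.mem_sdiff, Finset.mem_insert, Finset.mem_singleton] at hi
        push_neg at hi
        have h1 : (i:ℕ) ≠ N - 1 := fun hh => hi.2.1 (Fin.ext (by rw [hh, hvn1]))
        have h2 : (i:ℕ) ≠ N := fun hh => hi.2.2 (Fin.ext (by rw [hh, hvn0]))
        have := i.isLt
        omega
      have hterm : ∀ i ∈ Finset.univ \ ({n1, n0} : Finset (Fin (N+1))),
          x i * ∑ k, A₀ i k * x k = (2 * ((i:ℕ):ℝ) + 1) * (x i)^2 := by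
        intro i hi
        rw [hrowlt i (hmemlt i hi)]; ring
      rw [Finset.sum_congr rfl hterm, hrowblock n1 (Or.inl rfl) x,
        hrowblock n0 (Or.inr rfl) x, hb1_, hb2_, hb3_, hb4_]
      have hsumnn : 0 ≤ ∑ i ∈ Finset.univ \ ({n1, n0} : Finset (Fin (N+1))),
          (2 * ((i:ℕ):ℝ) + 1) * (x i)^2 := by
        apply Finset.sum_nonneg
        intro i _
        positivity
      by_cases huv : x n1 = 0 ∧ x n0 = 0
      · obtain ⟨i, hxi⟩ := Function.ne_iff.mp hx
        have hxi' : x i ≠ 0 := hxi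
        have hinotpair : i ∈ Finset.univ \ ({n1, n0} : Finset (Fin (N+1))) := by
          simp only [Finset.mem_sdiff, Finset.mem_insert, Finset.mem_singleton]
          refine ⟨Finset.mem_univ i, ?_⟩
          rintro (rfl | rfl)
          · exact hxi' huv.1
          · exact hxi' huv.2
        have hpos : 0 < ∑ i ∈ Finset.univ \ ({n1, n0} : Finset (Fin (N+1))),
            (2 * ((i:ℕ):ℝ) + 1) * (x i)^2 := by
          apply Finset.sum_pos'
          · intro k _; positivity
          · exact ⟨i, hinotpair, by positivity⟩
        rw [huv.1, huv.2]
        simpa using hpos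
      · have hq : 0 < x n1 * (b11 * x n1 + b12 * x n0) + x n0 * (b12 * x n1 + t * x n0) := by
          apply hquad
          tauto
        linarith [hsumnn, hq]
  exact ⟨A₀, hposdef, hoff, hdiagA₀, hsymm, realDiagonalizable_of_symmetrizer hposdef hsymm⟩
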